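/- Consider a commutative diagram of abelian groups with exact rows 0 → A₁ → B₁ → C₁ → D₁ and 0 → A₂ → B₂ → C₂ → D₂, and vertical maps α : A₁ → A₂ surjective, β : B₁ → B₂, γ : C₁ → C₂, δ : D₁ → D₂ an isomorphism. If furthermore there is a homomorphism ε : S → B₂ such that the composite S → B₂ → coker γ (via C₂) is an isomorphism, then the map B₁ ⊕ S → B₂ given by (β, ε) is surjective. -/
import Mathlib


/-- Abstract form of the final argument of Lemma 3.5: given a commutative
diagram of abelian groups with exact rows `0 → A₁ → B₁ → C₁ → D₁` and
`0 → A₂ → B₂ → C₂ → D₂`, `α` surjective, `δ` an isomorphism, and a homomorphism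
`ε : S →+ B₂` such that the composite `S → B₂ → C₂ → coker γ` is an
isomorphism, the map `(β, ε) : B₁ ⊕ S → B₂` is surjective. -/
theorem coprod_surjective_of_diagram
    {A₁ B₁ C₁ D₁ A₂ B₂ C₂ D₂ S : Type*}
    [AddCommGroup A₁] [AddCommGroup B₁] [AddCommGroup C₁] [AddCommGroup D₁]
    [AddCommGroup A₂] [AddCommGroup B₂] [AddCommGroup C₂] [AddCommGroup D₂]
    [AddCommGroup S]
    (i₁ : A₁ →+ B₁) (p₁ : B₁ →+ C₁) (q₁ : C₁ →+ D₁)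
    (i₂ : A₂ →+ B₂) (p₂ : B₂ →+ C₂) (q₂ : C₂ →+ D₂)
    (hi₁ : Function.Injective i₁) (hex₁ : Function.Exact i₁ p₁)
    (hex₁' : Function.Exact p₁ q₁)
    (hi₂ : Function.Injective i₂) (hex₂ : Function.Exact i₂ p₂)
    (hex₂' : Function.Exact p₂ q₂)
    (α : A₁ →+ A₂) (β : B₁ →+ B₂) (γ : C₁ →+ C₂) (δ : D₁ →+ D₂)
    (hcomm1 : i₂.comp α = β.comp i₁) (hcomm2 : p₂.comp β = γ.comp p₁)
    (hcomm3 : q₂.comp γ = δ.comp q₁)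
    (hα : Function.Surjective α) (hδ : Function.Bijective δ)
    (ε : S →+ B₂)
    (hε : Function.Bijective
      (((QuotientAddGroup.mk' γ.range).comp p₂).comp ε)) :
    Function.Surjective (β.coprod ε) := by
  intro b₂
  obtain ⟨s, hs⟩ := hε.2 ((QuotientAddGroup.mk' γ.range) (p₂ b₂))
  have hmem : p₂ (ε s) - p₂ b₂ ∈ γ.range := by
    rw [← QuotientAddGroup.eq_iff_sub_mem]
    simpa using hs
  obtain ⟨c₁, hc₁⟩ := hmem
  have hq : q₁ c₁ = 0 := by
    apply hδ.1
    have : δ (q₁ c₁) = q₂ (γ c₁) := (DFunLike.congr_fun hcomm3 c₁).symm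
    rw [map_zero, this, hc₁, map_sub, hex₂'.apply_apply_eq_zero,
      hex₂'.apply_apply_eq_zero, sub_zero]
  obtain ⟨b₁, hb₁⟩ := (hex₁' c₁).mp hq
  have hp : p₂ (ε s - b₂ - β b₁) = 0 := by
    have h2 : p₂ (β b₁) = γ (p₁ b₁) := DFunLike.congr_fun hcomm2 b₁
    rw [map_sub, map_sub, h2, hb₁, hc₁, sub_self]
  obtain ⟨a₂, ha₂⟩ := (hex₂ _).mp hp
  obtain ⟨a₁, ha₁⟩ := hα a₂
  have h1 : i₂ (α a₁) = β (i₁ a₁) := DFunLike.congr_fun hcomm1 a₁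
  refine ⟨(-(b₁ + i₁ a₁), s), ?_⟩
  have : β (i₁ a₁) = ε s - b₂ - β b₁ := by rw [← h1, ha₁, ha₂]
  simp only [AddMonoidHom.coprod_apply, map_neg, map_add, this]
  abel
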